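/- The set of patients matched (equivalently, the set of doctors matched) is the same in every stable matching; in the balanced complete-preferences case this is all of P and all of D (a special case of the Rural Hospitals / Lone Wolf theorem). -/

import Mathlib

/-- A matching (partial injective map from patients to doctors) is stable,
for partial strict preference lists given by `prank : P → D → Option ℕ` and
`drank : D → P → Option ℕ` (where `none` means unacceptable and a lower rank
means more preferred): it is individually rational and admits no blocking
pair `(p, d)` such that `p` and `d` find each other acceptable, `p` is
unmatched or strictly prefers `d` to his partner, and `d` is unmatched or
strictly prefers `p` to his partner. -/
def IsStable {P D : Type*} (prank : P → D → Option ℕ) (drank : D → P → Option ℕ)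
    (M : P → Option D) : Prop :=
  (∀ p p' d, M p = some d → M p' = some d → p = p') ∧
  (∀ p d, M p = some d → (prank p d).isSome ∧ (drank d p).isSome) ∧
  ¬ ∃ p d rp rd, prank p d = some rp ∧ drank d p = some rd ∧
      (M p = none ∨ ∃ d' r', M p = some d' ∧ prank p d' = some r' ∧ rp < r') ∧
      ((∀ p', M p' ≠ some d) ∨
        ∃ p' r', M p' = some d ∧ drank d p' = some r' ∧ rd < r')

lemma lone_wolf_key {P D : Type*} [Fintype P]
    (prank : P → D → Option ℕ) (drank : D → P → Option ℕ)
    (hp : ∀ p d d' r, prank p d = some r → prank p d' = some r → d = d')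
    (hd : ∀ d p p' r, drank d p = some r → drank d p' = some r → p = p')
    (M M' : P → Option D)
    (hM : IsStable prank drank M) (hM' : IsStable prank drank M')
    (p0 : P) (h0 : (M p0).isSome) (h0' : M' p0 = none) : False := by
  obtain ⟨Minj, MIR, Mnb⟩ := hM
  obtain ⟨M'inj, M'IR, M'nb⟩ := hM'
  -- the invariant: p matched in M to d, and p is unmatched in M' or strictly
  -- prefers d to his M'-partner
  set L : P → D → Prop := fun p d =>
    M' p = none ∨ ∃ d' r r', M' p = some d' ∧ prank p d = some r ∧
      prank p d' = some r' ∧ r < r' with hL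
  have step : ∀ p d, M p = some d → L p d →
      ∃ p1 d1, M p1 = some d1 ∧ M' p1 = some d ∧ L p1 d1 := by
    intro p d hpd hLpd
    obtain ⟨hrp, hrd⟩ := MIR p d hpd
    obtain ⟨rp, hrp⟩ := Option.isSome_iff_exists.mp hrp
    obtain ⟨rd, hrd⟩ := Option.isSome_iff_exists.mp hrd
    -- blocking-pair-left condition for M' holds at (p, d)
    have hLeft : M' p = none ∨ ∃ d' r', M' p = some d' ∧ prank p d' = some r' ∧ rp < r' := by
      rcases hLpd with h | ⟨d', r, r', h1, h2, h3, h4⟩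
      · exact Or.inl h
      · refine Or.inr ⟨d', r', h1, h3, ?_⟩
        have hre : rp = r := by rw [hrp] at h2; exact Option.some_inj.mp h2
        omega
    -- get p1 matched to d in M' with d strictly preferring p1 to p
    have hq : ¬ ((∀ p', M' p' ≠ some d) ∨
        ∃ p' r', M' p' = some d ∧ drank d p' = some r' ∧ rd < r') := by
      intro hR
      exact M'nb ⟨p, d, rp, rd, hrp, hrd, hLeft, hR⟩
    push_neg at hq
    obtain ⟨⟨p1, hp1⟩, hq2⟩ := hq
    have hpnotd : M' p ≠ some d := by
      intro hpd'
      rcases hLeft with h | ⟨d', r', h1, h2, h3⟩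
      · rw [hpd'] at h; exact nomatch h
      · rw [hpd'] at h1
        have : d' = d := by injection h1.symm
        subst this
        rw [hrp] at h2
        have : rp = r' := by injection h2
        omega
    obtain ⟨hrp1, hrd1⟩ := M'IR p1 d hp1
    obtain ⟨rp1, hrp1⟩ := Option.isSome_iff_exists.mp hrp1
    obtain ⟨rd1, hrd1⟩ := Option.isSome_iff_exists.mp hrd1
    have hrd1lt : rd1 < rd := by
      have hne : rd1 ≠ rd := by
        intro h; subst h
        exact hpnotd ((hd d p1 p rd1 hrd1 hrd) ▸ hp1)
      have := hq2 p1 rd1 hp1 hrd1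
      omega
    -- now (p1, d) must not block M, so p1 is matched in M to some d1 he
    -- strictly prefers over d
    have hq' : ¬ (M p1 = none ∨ ∃ d' r', M p1 = some d' ∧ prank p1 d' = some r' ∧ rp1 < r') := by
      intro hLft
      exact Mnb ⟨p1, d, rp1, rd1, hrp1, hrd1, hLft, Or.inr ⟨p, rd, hpd, hrd, hrd1lt⟩⟩
    push_neg at hq'
    obtain ⟨hq1', hq2'⟩ := hq'
    obtain ⟨d1, hd1⟩ := Option.ne_none_iff_exists'.mp hq1'
    obtain ⟨hrq1, _⟩ := MIR p1 d1 hd1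
    obtain ⟨r1, hr1⟩ := Option.isSome_iff_exists.mp hrq1
    have hr1lt : r1 < rp1 := by
      have hne : r1 ≠ rp1 := by
        intro h; subst h
        have : d1 = d := hp p1 d1 d r1 hr1 hrp1
        subst this
        have : p1 = p := Minj p1 p d1 hd1 hpd
        subst this
        exact hpnotd hp1
      have := hq2' d1 r1 hd1 hr1
      omega
    exact ⟨p1, d1, hd1, hp1, Or.inr ⟨d, r1, rp1, hp1, hr1, hrp1, hr1lt⟩⟩
  -- build the infinite sequence
  obtain ⟨d0, hd0⟩ := Option.isSome_iff_exists.mp h0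
  choose f g hf1 hf2 hf3 using step
  let T := {x : P × D // M x.1 = some x.2 ∧ L x.1 x.2}
  let stepf : T → T := fun x =>
    ⟨(f x.1.1 x.1.2 x.2.1 x.2.2, g x.1.1 x.1.2 x.2.1 x.2.2),
      hf1 _ _ _ _, hf3 _ _ _ _⟩
  let seq : ℕ → T := fun n => Nat.rec (⟨(p0, d0), hd0, Or.inl h0'⟩ : T)
    (fun _ x => stepf x) n
  have chain : ∀ n, M' (seq (n+1)).1.1 = some (seq n).1.2 := fun n => hf2 _ _ _ _
  have hA : ∀ n, M (seq n).1.1 = some (seq n).1.2 := fun n => (seq n).2.1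
  have hdist : ∀ i m, (seq i).1.1 = (seq (i + m + 1)).1.1 → False := by
    intro i
    induction i with
    | zero =>
      intro m h
      rw [show 0 + m + 1 = m + 1 by omega] at h
      have h0eq : (seq 0).1.1 = p0 := rfl
      have := chain m
      rw [← h, h0eq, h0'] at this
      exact nomatch this
    | succ k ih =>
      intro m h
      have c1 := chain k
      have c2 := chain (k + m + 1)
      have hmm : k + 1 + m + 1 = (k + m + 1) + 1 := by omega
      rw [hmm] at h
      rw [h] at c1
      rw [c1] at c2
      have hdeq : (seq k).1.2 = (seq (k + m + 1)).1.2 := by injection c2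
      have := Minj (seq k).1.1 (seq (k + m + 1)).1.1 (seq k).1.2 (hA k)
        (by rw [hdeq]; exact hA (k + m + 1))
      exact ih m this
  have hinj : Function.Injective (fun n => (seq n).1.1) := by
    intro i j hij
    by_contra hne
    rcases lt_or_gt_of_ne hne with h | h
    · obtain ⟨m, rfl⟩ : ∃ m, j = i + m + 1 := ⟨j - i - 1, by omega⟩
      exact hdist i m hij
    · obtain ⟨m, rfl⟩ : ∃ m, i = j + m + 1 := ⟨i - j - 1, by omega⟩
      exact hdist j m hij.symm
  exact not_injective_infinite_finite _ hinj

open Classical in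
noncomputable def Minv {P D : Type*} (M : P → Option D) : D → Option P :=
  fun d => if h : ∃ p, M p = some d then some h.choose else none

lemma Minv_eq_some {P D : Type*} (M : P → Option D)
    (Minj : ∀ p p' d, M p = some d → M p' = some d → p = p')
    (d : D) (p : P) : Minv M d = some p ↔ M p = some d := by
  unfold Minv
  constructor
  · intro h
    split at h
    · next he =>
      have := he.choose_spec
      rw [Option.some_inj.mp h] at this
      exact this
    · exact nomatch h
  · intro h
    have he : ∃ q, M q = some d := ⟨p, h⟩
    rw [dif_pos he]
    exact congrArg some (Minj _ _ _ he.choose_spec h)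

lemma Minv_eq_none {P D : Type*} (M : P → Option D)
    (Minj : ∀ p p' d, M p = some d → M p' = some d → p = p')
    (d : D) : Minv M d = none ↔ ∀ p, M p ≠ some d := by
  constructor
  · intro h p hpd
    rw [← Minv_eq_some M Minj] at hpd
    rw [h] at hpd; exact nomatch hpd
  · intro h
    unfold Minv
    rw [dif_neg]
    rintro ⟨p, hpd⟩; exact h p hpd

lemma Minv_stable {P D : Type*} (prank : P → D → Option ℕ) (drank : D → P → Option ℕ)
    (M : P → Option D) (hM : IsStable prank drank M) :
    IsStable drank prank (Minv M) := by
  obtain ⟨Minj, MIR, Mnb⟩ := hM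
  refine ⟨?_, ?_, ?_⟩
  · intro d d' p h1 h2
    rw [Minv_eq_some M Minj] at h1 h2
    rw [h1] at h2
    exact Option.some_inj.mp h2
  · intro d p h
    rw [Minv_eq_some M Minj] at h
    exact (MIR p d h).symm
  · rintro ⟨d, p, rd, rp, h1, h2, h3, h4⟩
    refine Mnb ⟨p, d, rp, rd, h2, h1, ?_, ?_⟩
    · rcases h4 with h | ⟨d', r', h5, h6, h7⟩
      · left
        cases hmp : M p with
        | none => rfl
        | some d' => exact absurd ((Minv_eq_some M Minj d' p).mpr hmp) (h d')
      · right
        exact ⟨d', r', (Minv_eq_some M Minj d' p).mp h5, h6, h7⟩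
    · rcases h3 with h | ⟨p', r', h5, h6, h7⟩
      · left
        intro p' hp'
        rw [← Minv_eq_some M Minj] at hp'
        rw [h] at hp'; exact nomatch hp'
      · right
        exact ⟨p', r', (Minv_eq_some M Minj d p').mp h5, h6, h7⟩


/-- Rural Hospitals / Lone Wolf theorem: the set of matched
patients (and the set of matched doctors) is the same in every stable
matching; moreover, in the balanced case with complete preference lists every
patient (hence every doctor) is matched in any stable matching. -/
theorem rural_hospitals (P D : Type*) [Fintype P] [Fintype D]
    (prank : P → D → Option ℕ) (drank : D → P → Option ℕ)
    (hp : ∀ p d d' r, prank p d = some r → prank p d' = some r → d = d')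
    (hd : ∀ d p p' r, drank d p = some r → drank d p' = some r → p = p')
    (M M' : P → Option D)
    (hM : IsStable prank drank M) (hM' : IsStable prank drank M') :
    (∀ p, (M p).isSome ↔ (M' p).isSome) ∧
    (∀ d, (∃ p, M p = some d) ↔ (∃ p, M' p = some d)) ∧
    (Fintype.card P = Fintype.card D →
      (∀ p d, (prank p d).isSome) → (∀ d p, (drank d p).isSome) →
      ∀ p, (M p).isSome) := by
  classical
  have part1 : ∀ (N N' : P → Option D), IsStable prank drank N → IsStable prank drank N' →
      ∀ p, (N p).isSome → (N' p).isSome := by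
    intro N N' hN hN' p h
    by_contra h'
    exact lone_wolf_key prank drank hp hd N N' hN hN' p h
      (Option.not_isSome_iff_eq_none.mp h')
  have hMinv := Minv_stable prank drank M hM
  have hM'inv := Minv_stable prank drank M' hM'
  have part2 : ∀ (N N' : D → Option P), IsStable drank prank N → IsStable drank prank N' →
      ∀ d, (N d).isSome → (N' d).isSome := by
    intro N N' hN hN' d h
    by_contra h'
    exact lone_wolf_key drank prank hd hp N N' hN hN' d h
      (Option.not_isSome_iff_eq_none.mp h')
  refine ⟨fun p => ⟨part1 M M' hM hM' p, part1 M' M hM' hM p⟩, ?_, ?_⟩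
  · intro d
    constructor
    · rintro ⟨q, hq⟩
      have h1 : (Minv M d).isSome := Option.isSome_iff_exists.mpr
        ⟨q, (Minv_eq_some M hM.1 d q).mpr hq⟩
      have h2 := part2 (Minv M) (Minv M') hMinv hM'inv d h1
      obtain ⟨q', hq'⟩ := Option.isSome_iff_exists.mp h2
      exact ⟨q', (Minv_eq_some M' hM'.1 d q').mp hq'⟩
    · rintro ⟨q, hq⟩
      have h1 : (Minv M' d).isSome := Option.isSome_iff_exists.mpr
        ⟨q, (Minv_eq_some M' hM'.1 d q).mpr hq⟩
      have h2 := part2 (Minv M') (Minv M) hM'inv hMinv d h1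
      obtain ⟨q', hq'⟩ := Option.isSome_iff_exists.mp h2
      exact ⟨q', (Minv_eq_some M hM.1 d q').mp hq'⟩
  · intro hcard hpc hdc p
    by_contra h
    have hMp : M p = none := Option.not_isSome_iff_eq_none.mp h
    -- there is an unmatched doctor
    have hud : ∃ d, ∀ p', M p' ≠ some d := by
      by_contra hall
      push_neg at hall
      -- every doctor is matched: build an injection D → {x : P // x ≠ p}
      choose F hF using hall
      have hFinj : Function.Injective F := by
        intro d1 d2 h12
        have := hF d1
        rw [h12, hF d2] at this
        exact (Option.some_inj.mp this).symm
      have hFne : ∀ d, F d ≠ p := by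
        intro d hdp
        have := hF d
        rw [hdp, hMp] at this
        exact nomatch this
      have hinj2 : Function.Injective (fun d => (⟨F d, hFne d⟩ : {x : P // x ≠ p})) := by
        intro d1 d2 h12
        exact hFinj (congrArg Subtype.val h12)
      have hle := Fintype.card_le_of_injective _ hinj2
      have hlt : Fintype.card {x : P // x ≠ p} < Fintype.card P :=
        Fintype.card_subtype_lt (x := p) (by simp)
      omega
    obtain ⟨d, hud⟩ := hud
    obtain ⟨rp, hrp⟩ := Option.isSome_iff_exists.mp (hpc p d)
    obtain ⟨rd, hrd⟩ := Option.isSome_iff_exists.mp (hdc d p)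
    exact hM.2.2 ⟨p, d, rp, rd, hrp, hrd, Or.inl hMp, Or.inl hud⟩
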